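/- Let G be a maximal stabilizer group on N qubits and k ≥ 1. The stabilizer state |ψ_G⟩ has maximally mixed reduced state on every subset of k sites if and only if k < δ(G), where δ(G) is the minimum support size over nonidentity elements of G. -/

import Mathlib

open Matrix Complex BigOperators
open scoped Classical

noncomputable section

/-- Single-qubit Pauli matrices: I, X, Y, Z. -/
def pauli1 : Fin 4 → Matrix (Fin 2) (Fin 2) ℂ
  | 0 => 1
  | 1 => !![0, 1; 1, 0]
  | 2 => !![0, -Complex.I; Complex.I, 0]
  | 3 => !![1, 0; 0, -1]

/-- Operators on an N-qubit system with sites indexed by `V`. -/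
abbrev QOp (V : Type*) := Matrix (V → Fin 2) (V → Fin 2) ℂ

/-- The prefactor-1 Pauli string with single-site labels `p`. -/
def pauliOp {V : Type*} [Fintype V] (p : V → Fin 4) : QOp V :=
  Matrix.of fun x y => ∏ i, pauli1 (p i) (x i) (y i)

/-- Support of a Pauli string: sites where the tensor factor is not the identity. -/
def psupp {V : Type*} [Fintype V] (p : V → Fin 4) : Finset V :=
  Finset.univ.filter fun i => p i ≠ 0

/-- Allowed phases of Pauli group elements. -/
def isPhase (a : ℂ) : Prop := a = 1 ∨ a = -1 ∨ a = Complex.I ∨ a = -Complex.I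

/-- A maximal stabilizer group on qubits indexed by `V`: an abelian set of
prefactor-`±1` Pauli strings, closed under multiplication, containing `I`,
not containing `-I`, of cardinality `2 ^ |V|`. -/
structure MaxStabilizer (V : Type*) [Fintype V] [DecidableEq V] where
  carrier : Finset (QOp V)
  mem_pauli : ∀ g ∈ carrier, ∃ (c : ℂ) (p : V → Fin 4), (c = 1 ∨ c = -1) ∧ g = c • pauliOp p
  one_mem : (1 : QOp V) ∈ carrier
  mul_mem : ∀ g ∈ carrier, ∀ h ∈ carrier, g * h ∈ carrier
  mul_comm' : ∀ g ∈ carrier, ∀ h ∈ carrier, g * h = h * g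
  neg_one_not_mem : (-1 : QOp V) ∉ carrier
  card_eq : carrier.card = 2 ^ Fintype.card V

/-- `ψ` is the stabilizer state of `G`: a normalized common `+1`-eigenvector of all
elements of `G`. -/
def IsStabState {V : Type*} [Fintype V] [DecidableEq V] (G : MaxStabilizer V)
    (ψ : (V → Fin 2) → ℂ) : Prop :=
  (∀ g ∈ G.carrier, Matrix.mulVec g ψ = ψ) ∧ ∑ x, starRingEnd ℂ (ψ x) * ψ x = 1

/-- The projector `|ψ⟩⟨ψ|` onto a state `ψ`. -/
def projOf {V : Type*} (ψ : (V → Fin 2) → ℂ) : QOp V :=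
  Matrix.vecMulVec ψ fun x => starRingEnd ℂ (ψ x)

/-- Reduced density matrix (partial trace over the complement of `A`). -/
def reduced {V : Type*} [Fintype V] [DecidableEq V] (ρ : QOp V) (A : Finset V) :
    Matrix ({i // i ∈ A} → Fin 2) ({i // i ∈ A} → Fin 2) ℂ :=
  Matrix.of fun a b => ∑ c : {i // i ∉ A} → Fin 2,
    ρ (fun i => if h : i ∈ A then a ⟨i, h⟩ else c ⟨i, h⟩)
      (fun i => if h : i ∈ A then b ⟨i, h⟩ else c ⟨i, h⟩)

/-- `δ(G)`: minimum support size over nonidentity elements of `G`. -/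
def sdelta {V : Type*} [Fintype V] [DecidableEq V] (G : MaxStabilizer V) : ℕ :=
  sInf {k | ∃ (c : ℂ) (p : V → Fin 4), (c = 1 ∨ c = -1) ∧ c • pauliOp p ∈ G.carrier ∧
    c • pauliOp p ≠ 1 ∧ (psupp p).card = k}


section AuxProof
variable {V : Type*} [Fintype V] [DecidableEq V]

lemma pauli1_herm (a : Fin 4) : (pauli1 a)ᴴ = pauli1 a := by
  fin_cases a <;> ext i j <;> fin_cases i <;> fin_cases j <;>
    simp [pauli1, Matrix.conjTranspose_apply, Matrix.one_apply]

lemma pauli1_mul_self (a : Fin 4) : pauli1 a * pauli1 a = 1 := by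
  fin_cases a <;> ext i j <;> fin_cases i <;> fin_cases j <;>
    simp [pauli1, Matrix.mul_apply, Fin.sum_univ_two, Matrix.one_apply] <;> ring_nf <;>
    simp [Complex.I_sq]

lemma pauli1_trace (a : Fin 4) : (pauli1 a).trace = if a = 0 then 2 else 0 := by
  fin_cases a <;> simp [pauli1, Matrix.trace, Fin.sum_univ_two, Matrix.one_apply] <;> norm_num

lemma pauli1_mul_trace (a b : Fin 4) : (pauli1 a * pauli1 b).trace = if a = b then 2 else 0 := by
  fin_cases a <;> fin_cases b <;>
    simp [pauli1, Matrix.trace, Matrix.mul_apply, Fin.sum_univ_two, Matrix.one_apply,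
      Matrix.diag] <;> ring_nf <;> simp [Complex.I_sq] <;> ring

lemma pauli1_complete (x y z w : Fin 2) :
    ∑ t : Fin 4, pauli1 t x y * pauli1 t z w = if x = w ∧ y = z then 2 else 0 := by
  fin_cases x <;> fin_cases y <;> fin_cases z <;> fin_cases w <;>
    simp [Fin.sum_univ_four, pauli1, Matrix.one_apply] <;> ring_nf <;> simp [Complex.I_sq] <;> ring


lemma prod_entry_one (x y : V → Fin 2) :
    (∏ i, (1 : Matrix (Fin 2) (Fin 2) ℂ) (x i) (y i)) = if x = y then 1 else 0 := by
  by_cases h : x = y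
  · subst h; simp [Matrix.one_apply]
  · obtain ⟨i, hi⟩ : ∃ i, x i ≠ y i := by
      by_contra hc; push_neg at hc; exact h (funext hc)
    rw [if_neg h]
    exact Finset.prod_eq_zero (i := i) (f := fun i => (1 : Matrix (Fin 2) (Fin 2) ℂ) (x i) (y i))
      (Finset.mem_univ i) (Matrix.one_apply_ne hi)

lemma pauliOp_mul (p q : V → Fin 4) :
    pauliOp p * pauliOp q = Matrix.of fun x y => ∏ i, (pauli1 (p i) * pauli1 (q i)) (x i) (y i) := by
  ext x y
  simp only [Matrix.mul_apply, pauliOp, Matrix.of_apply]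
  rw [Fintype.prod_sum (fun i t => pauli1 (p i) (x i) t * pauli1 (q i) t (y i))]
  exact Finset.sum_congr rfl fun z _ => (Finset.prod_mul_distrib).symm

lemma pauliOp_mul_self (p : V → Fin 4) : pauliOp p * pauliOp p = 1 := by
  rw [pauliOp_mul]
  ext x y
  simp only [Matrix.of_apply, pauli1_mul_self]
  rw [prod_entry_one]
  simp [Matrix.one_apply]

lemma pauli1_star (a : Fin 4) (i j : Fin 2) :
    starRingEnd ℂ (pauli1 a j i) = pauli1 a i j := by
  have := congrFun (congrFun (pauli1_herm a) i) j
  simpa [Matrix.conjTranspose_apply] using this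

lemma pauliOp_herm (p : V → Fin 4) : (pauliOp p)ᴴ = pauliOp p := by
  ext x y
  simp only [Matrix.conjTranspose_apply, pauliOp, Matrix.of_apply, star_def, map_prod]
  exact Finset.prod_congr rfl fun i _ => pauli1_star (p i) (x i) (y i)

lemma trace_pauliOp (p : V → Fin 4) : (pauliOp p).trace = ∏ i, (pauli1 (p i)).trace := by
  simp only [Matrix.trace, Matrix.diag, pauliOp, Matrix.of_apply, Matrix.trace]
  rw [← Fintype.prod_sum (fun i t => pauli1 (p i) t t)]

lemma trace_pauliOp_mul (p q : V → Fin 4) :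
    (pauliOp p * pauliOp q).trace = if p = q then 2 ^ Fintype.card V else 0 := by
  rw [pauliOp_mul]
  have : (Matrix.of fun x y => ∏ i, (pauli1 (p i) * pauli1 (q i)) (x i) (y i) :
      QOp V).trace = ∏ i, (pauli1 (p i) * pauli1 (q i)).trace := by
    simp only [Matrix.trace, Matrix.diag, Matrix.of_apply]
    rw [← Fintype.prod_sum (fun i t => (pauli1 (p i) * pauli1 (q i)) t t)]
  rw [this]
  by_cases h : p = q
  · simp [h, pauli1_mul_trace, Finset.prod_const, Finset.card_univ]
  · obtain ⟨i, hi⟩ : ∃ i, p i ≠ q i := by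
      by_contra hc; push_neg at hc; exact h (funext hc)
    rw [if_neg h]
    exact Finset.prod_eq_zero (Finset.mem_univ i) (by simp [pauli1_mul_trace, hi])

lemma trace_pauliOp_eq (p : V → Fin 4) :
    (pauliOp p).trace = if ∀ i, p i = 0 then 2 ^ Fintype.card V else 0 := by
  rw [trace_pauliOp]
  by_cases h : ∀ i, p i = 0
  · simp [h, pauli1_trace, Finset.prod_const, Finset.card_univ]
  · push_neg at h
    obtain ⟨i, hi⟩ := h
    rw [if_neg (by push_neg; exact ⟨i, hi⟩)]
    exact Finset.prod_eq_zero (Finset.mem_univ i) (by simp [pauli1_trace, hi])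

lemma pauliOp_const_zero : pauliOp (fun _ : V => (0 : Fin 4)) = 1 := by
  ext x y
  simp only [pauliOp, Matrix.of_apply]
  show (∏ i, (1 : Matrix (Fin 2) (Fin 2) ℂ) (x i) (y i)) = _
  rw [prod_entry_one]; simp [Matrix.one_apply]

lemma sum_merge (A : Finset V) (F : (V → Fin 2) → ℂ) :
    ∑ x, F x = ∑ a : {i // i ∈ A} → Fin 2, ∑ c : {i // i ∉ A} → Fin 2,
      F (fun i => if h : i ∈ A then a ⟨i, h⟩ else c ⟨i, h⟩) := by
  rw [← Equiv.sum_comp (Equiv.piEquivPiSubtypeProd (fun i => i ∈ A) (fun _ => Fin 2)).symm F,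
    Fintype.sum_prod_type]
  rfl

lemma prod_split (A : Finset V) (p : V → Fin 4) (hp : ∀ i ∉ A, p i = 0) (x y : V → Fin 2) :
    ∏ i, pauli1 (p i) (x i) (y i) =
      (∏ i : {i // i ∈ A}, pauli1 (p i) (x i) (y i)) *
        (if (fun i : {i // i ∉ A} => x i) = (fun i : {i // i ∉ A} => y i) then 1 else 0) := by
  rw [← Finset.prod_mul_prod_compl A (fun i => pauli1 (p i) (x i) (y i))]
  refine congrArg₂ (· * ·) (Finset.prod_subtype A (fun i => Iff.rfl) _) ?_
  rw [Finset.prod_subtype (p := fun i => i ∉ A) Aᶜ (fun i => by simp) (fun i => pauli1 (p i) (x i) (y i))]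
  have h1 : ∀ i : {i // ¬ i ∈ A}, pauli1 (p i) (x i) (y i) =
      (1 : Matrix (Fin 2) (Fin 2) ℂ) (x i) (y i) := by
    intro i
    rw [hp i i.2]
    rfl
  exact (Finset.prod_congr rfl fun i _ => h1 i).trans
    (prod_entry_one (fun i : {i // ¬ i ∈ A} => x i) (fun i => y i))

def mrg (A : Finset V) (a : {i // i ∈ A} → Fin 2) (c : {i // i ∉ A} → Fin 2) : V → Fin 2 :=
  fun i => if h : i ∈ A then a ⟨i, h⟩ else c ⟨i, h⟩

lemma mrg_mem (A : Finset V) (a : {i // i ∈ A} → Fin 2) (c : {i // i ∉ A} → Fin 2)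
    (i : {i // i ∈ A}) : mrg A a c i = a i := dif_pos i.2

lemma mrg_res (A : Finset V) (a : {i // i ∈ A} → Fin 2) (c : {i // i ∉ A} → Fin 2) :
    (fun i : {i // i ∉ A} => mrg A a c i) = c := funext fun i => dif_neg i.2

lemma sum_mrg (A : Finset V) (F : (V → Fin 2) → ℂ) :
    ∑ x, F x = ∑ a : {i // i ∈ A} → Fin 2, ∑ c : {i // i ∉ A} → Fin 2, F (mrg A a c) :=
  sum_merge A F

lemma reduced_apply (ρ : QOp V) (A : Finset V) (a b : {i // i ∈ A} → Fin 2) :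
    reduced ρ A a b = ∑ c : {i // i ∉ A} → Fin 2, ρ (mrg A a c) (mrg A b c) := rfl

lemma trace_reduced_mul (A : Finset V) (ψ : (V → Fin 2) → ℂ) (p : V → Fin 4)
    (hp : ∀ i ∉ A, p i = 0) :
    ((reduced (projOf ψ) A) * pauliOp (fun i : {i // i ∈ A} => p i)).trace
      = ∑ x, starRingEnd ℂ (ψ x) * ((pauliOp p).mulVec ψ x) := by
  have key : ∀ (b : {i // i ∈ A} → Fin 2) (c : {i // i ∉ A} → Fin 2),
      ∑ x, starRingEnd ℂ (ψ (mrg A b c)) * (pauliOp p (mrg A b c) x * ψ x)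
        = ∑ a, starRingEnd ℂ (ψ (mrg A b c)) *
            ((∏ i : {i // i ∈ A}, pauli1 (p i) (b i) (a i)) * ψ (mrg A a c)) := by
    intro b c
    rw [sum_mrg A]
    refine Finset.sum_congr rfl fun a _ => ?_
    have hexp : ∀ d : {i // i ∉ A}  → Fin 2,
        (∏ i, pauli1 (p i) (mrg A b c i) (mrg A a d i))
          = (∏ i : {i // i ∈ A}, pauli1 (p i) (b i) (a i)) *
            (if c = d then 1 else 0) := by
      intro d
      rw [prod_split A p hp]
      congr 1
      · exact Finset.prod_congr rfl fun i _ => by rw [mrg_mem, mrg_mem]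
      · rw [mrg_res, mrg_res]
    calc ∑ d, starRingEnd ℂ (ψ (mrg A b c)) *
          (pauliOp p (mrg A b c) (mrg A a d) * ψ (mrg A a d))
        = ∑ d, (if c = d then starRingEnd ℂ (ψ (mrg A b c)) *
            ((∏ i : {i // i ∈ A}, pauli1 (p i) (b i) (a i)) * ψ (mrg A a d)) else 0) := by
          refine Finset.sum_congr rfl fun d _ => ?_
          rw [show pauliOp p (mrg A b c) (mrg A a d)
            = ∏ i, pauli1 (p i) (mrg A b c i) (mrg A a d i) from rfl, hexp d]
          by_cases h : c = d <;> simp [h] <;> ring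
      _ = _ := by rw [Finset.sum_ite_eq]; simp
  -- expand the RHS
  have hR : ∑ x, starRingEnd ℂ (ψ x) * ((pauliOp p).mulVec ψ x)
      = ∑ b : {i // i ∈ A} → Fin 2, ∑ c : {i // i ∉ A} → Fin 2, ∑ a,
          starRingEnd ℂ (ψ (mrg A b c)) *
            ((∏ i : {i // i ∈ A}, pauli1 (p i) (b i) (a i)) * ψ (mrg A a c)) := by
    rw [sum_mrg A]
    refine Finset.sum_congr rfl fun b _ => Finset.sum_congr rfl fun c _ => ?_
    rw [Matrix.mulVec, dotProduct, Finset.mul_sum]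
    exact key b c
  rw [hR]
  -- expand the LHS
  rw [Matrix.trace]
  calc ∑ b, (reduced (projOf ψ) A * pauliOp fun i : {i // i ∈ A} => p i).diag b
      = ∑ b, ∑ a, (∑ c, ψ (mrg A b c) * starRingEnd ℂ (ψ (mrg A a c))) *
          ∏ i : {i // i ∈ A}, pauli1 (p i) (a i) (b i) := by
        refine Finset.sum_congr rfl fun b _ => ?_
        rw [Matrix.diag_apply, Matrix.mul_apply]
        refine Finset.sum_congr rfl fun a _ => ?_
        rw [reduced_apply]
        rfl
    _ = ∑ b, ∑ a, ∑ c, ψ (mrg A b c) * starRingEnd ℂ (ψ (mrg A a c)) *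
          ∏ i : {i // i ∈ A}, pauli1 (p i) (a i) (b i) := by
        refine Finset.sum_congr rfl fun b _ => Finset.sum_congr rfl fun a _ => ?_
        rw [Finset.sum_mul]
    _ = ∑ a, ∑ b, ∑ c, ψ (mrg A b c) * starRingEnd ℂ (ψ (mrg A a c)) *
          ∏ i : {i // i ∈ A}, pauli1 (p i) (a i) (b i) := Finset.sum_comm
    _ = ∑ b, ∑ c, ∑ a, starRingEnd ℂ (ψ (mrg A b c)) *
          ((∏ i : {i // i ∈ A}, pauli1 (p i) (b i) (a i)) * ψ (mrg A a c)) := by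
        refine Finset.sum_congr rfl fun a _ => ?_
        rw [Finset.sum_comm]
        exact Finset.sum_congr rfl fun c _ => Finset.sum_congr rfl fun b _ => by ring
  


lemma matrix_sum_mulVec {ι : Type*} (s : Finset ι) (f : ι → QOp V) (v : (V → Fin 2) → ℂ) :
    (∑ g ∈ s, f g).mulVec v = ∑ g ∈ s, (f g).mulVec v := by
  ext x
  simp only [Matrix.mulVec, dotProduct, Finset.sum_apply, Matrix.sum_apply, Finset.sum_mul]
  exact Finset.sum_comm

section Stab
variable (G : MaxStabilizer V)

lemma stab_mul_self {g : QOp V} (hg : g ∈ G.carrier) : g * g = 1 := by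
  obtain ⟨c, p, hc, rfl⟩ := G.mem_pauli g hg
  rw [Matrix.smul_mul, Matrix.mul_smul, pauliOp_mul_self, smul_smul]
  rcases hc with h | h <;> simp [h]

lemma stab_herm {g : QOp V} (hg : g ∈ G.carrier) : gᴴ = g := by
  obtain ⟨c, p, hc, rfl⟩ := G.mem_pauli g hg
  rw [Matrix.conjTranspose_smul, pauliOp_herm]
  rcases hc with h | h <;> simp [h]

lemma stab_trace {g : QOp V} (hg : g ∈ G.carrier) (hg1 : g ≠ 1) : g.trace = 0 := by
  obtain ⟨c, p, hc, rfl⟩ := G.mem_pauli g hg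
  rw [Matrix.trace_smul, trace_pauliOp_eq]
  by_cases h : ∀ i, p i = 0
  · exfalso
    have hp : p = fun _ => 0 := funext h
    rw [hp, pauliOp_const_zero] at hg hg1
    rcases hc with h' | h'
    · rw [h', one_smul] at hg1; exact hg1 rfl
    · rw [h'] at hg
      exact G.neg_one_not_mem (by simpa using hg)
  · rw [if_neg h, smul_zero]

/-- The group average. -/
def stabProj : QOp V := ((2 : ℂ) ^ Fintype.card V)⁻¹ • ∑ g ∈ G.carrier, g

lemma two_pow_ne : ((2 : ℂ) ^ Fintype.card V) ≠ 0 := pow_ne_zero _ two_ne_zero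

lemma stabProj_mul_self : stabProj G * stabProj G = stabProj G := by
  rw [stabProj, Matrix.smul_mul, Matrix.mul_smul, Finset.sum_mul]
  have h1 : ∀ g ∈ G.carrier, g * ∑ h ∈ G.carrier, h = ∑ h ∈ G.carrier, h := by
    intro g hg
    rw [Finset.mul_sum]
    refine Finset.sum_nbij' (fun h => g * h) (fun h => g * h) ?_ ?_ ?_ ?_ ?_
    · intro h hh; exact G.mul_mem g hg h hh
    · intro h hh; exact G.mul_mem g hg h hh
    · intro h _; show g * (g * h) = h; rw [← mul_assoc, stab_mul_self G hg, one_mul]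
    · intro h _; show g * (g * h) = h; rw [← mul_assoc, stab_mul_self G hg, one_mul]
    · intro h _; rfl
  rw [Finset.sum_congr rfl h1, Finset.sum_const, G.card_eq,
    ← Nat.cast_smul_eq_nsmul ℂ, smul_smul, smul_smul]
  congr 1
  push_cast
  rw [mul_assoc, inv_mul_cancel₀ (two_pow_ne), mul_one]

lemma stabProj_herm : (stabProj G)ᴴ = stabProj G := by
  rw [stabProj, Matrix.conjTranspose_smul, Matrix.conjTranspose_sum]
  congr 1
  · simp
  · exact Finset.sum_congr rfl fun g hg => stab_herm G hg

lemma stabProj_trace : (stabProj G).trace = 1 := by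
  rw [stabProj, Matrix.trace_smul, Matrix.trace_sum]
  rw [Finset.sum_eq_single_of_mem 1 G.one_mem (fun g hg hne => stab_trace G hg hne)]
  rw [Matrix.trace_one, Fintype.card_fun]
  push_cast
  simp [inv_mul_cancel₀ (two_pow_ne (V := V))]

lemma stabProj_mulVec {ψ : (V → Fin 2) → ℂ} (hψ : IsStabState G ψ) :
    (stabProj G).mulVec ψ = ψ := by
  rw [stabProj, Matrix.smul_mulVec, matrix_sum_mulVec]
  rw [Finset.sum_congr rfl hψ.1, Finset.sum_const, G.card_eq]
  rw [← Nat.cast_smul_eq_nsmul ℂ, smul_smul]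
  push_cast
  rw [inv_mul_cancel₀ (two_pow_ne), one_smul]

end Stab

lemma projOf_apply (ψ : (V → Fin 2) → ℂ) (x y : V → Fin 2) :
    projOf ψ x y = ψ x * starRingEnd ℂ (ψ y) := rfl

lemma projOf_herm (ψ : (V → Fin 2) → ℂ) : (projOf ψ)ᴴ = projOf ψ := by
  ext x y
  simp only [Matrix.conjTranspose_apply, projOf_apply, star_def]
  rw [_root_.map_mul, Complex.conj_conj]
  ring

lemma projOf_trace (ψ : (V → Fin 2) → ℂ) (hn : ∑ x, starRingEnd ℂ (ψ x) * ψ x = 1) :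
    (projOf ψ).trace = 1 := by
  rw [Matrix.trace, ← hn]
  exact Finset.sum_congr rfl fun x _ => by rw [Matrix.diag_apply, projOf_apply]; ring

lemma projOf_mul_self (ψ : (V → Fin 2) → ℂ) (hn : ∑ x, starRingEnd ℂ (ψ x) * ψ x = 1) :
    projOf ψ * projOf ψ = projOf ψ := by
  ext x y
  rw [Matrix.mul_apply]
  calc ∑ z, projOf ψ x z * projOf ψ z y
      = (ψ x * starRingEnd ℂ (ψ y)) * ∑ z, starRingEnd ℂ (ψ z) * ψ z := by
        rw [Finset.mul_sum]
        exact Finset.sum_congr rfl fun z _ => by rw [projOf_apply, projOf_apply]; ring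
    _ = projOf ψ x y := by rw [hn, mul_one, projOf_apply]

lemma mul_projOf (M : QOp V) (ψ : (V → Fin 2) → ℂ) (hM : M.mulVec ψ = ψ) :
    M * projOf ψ = projOf ψ := by
  ext x y
  rw [Matrix.mul_apply, projOf_apply]
  have : (M.mulVec ψ) x = ψ x := by rw [hM]
  rw [← this, Matrix.mulVec, dotProduct, Finset.sum_mul]
  exact Finset.sum_congr rfl fun z _ => by rw [projOf_apply]; ring

lemma herm_idem_trace_zero (M : QOp V) (h1 : Mᴴ = M) (h2 : M * M = M) (h3 : M.trace = 0) :
    M = 0 := by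
  have key : (Mᴴ * M).trace = 0 := by rw [h1, h2, h3]
  have expand : (Mᴴ * M).trace = ↑(∑ y, ∑ x, Complex.normSq (M x y)) := by
    rw [Matrix.trace]
    push_cast
    refine Finset.sum_congr rfl fun y _ => ?_
    rw [Matrix.diag_apply, Matrix.mul_apply]
    refine Finset.sum_congr rfl fun x _ => ?_
    rw [Matrix.conjTranspose_apply, star_def, ← Complex.normSq_eq_conj_mul_self]
  rw [expand, Complex.ofReal_eq_zero] at key
  have hz : ∀ y ∈ Finset.univ, ∀ x ∈ Finset.univ, Complex.normSq (M x y) = 0 := by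
    intro y hy
    have hyz := (Finset.sum_eq_zero_iff_of_nonneg (fun y _ =>
      Finset.sum_nonneg fun x _ => Complex.normSq_nonneg _)).1 key y hy
    exact fun x hx => (Finset.sum_eq_zero_iff_of_nonneg
      (fun x _ => Complex.normSq_nonneg _)).1 hyz x hx
  ext x y
  exact Complex.normSq_eq_zero.1 (hz y (Finset.mem_univ y) x (Finset.mem_univ x))

lemma projOf_eq_stabProj (G : MaxStabilizer V) (ψ : (V → Fin 2) → ℂ)
    (hψ : IsStabState G ψ) : projOf ψ = stabProj G := by
  have hPρ : stabProj G * projOf ψ = projOf ψ := mul_projOf _ _ (stabProj_mulVec G hψ)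
  have hρP : projOf ψ * stabProj G = projOf ψ := by
    have := congrArg Matrix.conjTranspose hPρ
    rwa [Matrix.conjTranspose_mul, stabProj_herm, projOf_herm] at this
  have hM : (stabProj G - projOf ψ) = 0 := by
    refine herm_idem_trace_zero _ ?_ ?_ ?_
    · rw [Matrix.conjTranspose_sub, stabProj_herm, projOf_herm]
    · rw [Matrix.sub_mul, Matrix.mul_sub, Matrix.mul_sub, stabProj_mul_self, hPρ, hρP,
        projOf_mul_self ψ hψ.2]
      abel
    · rw [Matrix.trace_sub, stabProj_trace, projOf_trace ψ hψ.2, sub_self]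
  have := sub_eq_zero.1 hM
  rw [this]

lemma expect_eq_trace (ψ : (V → Fin 2) → ℂ) (Q : QOp V) :
    ∑ x, starRingEnd ℂ (ψ x) * (Q.mulVec ψ) x = (projOf ψ * Q).trace := by
  rw [Matrix.trace]
  have : ∀ z, (projOf ψ * Q).diag z = ∑ x, ψ z * starRingEnd ℂ (ψ x) * Q x z := by
    intro z
    rw [Matrix.diag_apply, Matrix.mul_apply]
    exact Finset.sum_congr rfl fun x _ => by rw [projOf_apply]
  rw [Finset.sum_congr rfl fun z _ => this z, Finset.sum_comm]
  refine Finset.sum_congr rfl fun x _ => ?_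
  rw [Matrix.mulVec, dotProduct, Finset.mul_sum]
  exact Finset.sum_congr rfl fun z _ => by ring

lemma trace_stabProj_mul_pauliOp (G : MaxStabilizer V) (p : V → Fin 4)
    (hnot : ∀ g ∈ G.carrier, ∀ (c : ℂ) (q : V → Fin 4), (c = 1 ∨ c = -1) →
      g = c • pauliOp q → q ≠ p) :
    (stabProj G * pauliOp p).trace = 0 := by
  rw [stabProj, Matrix.smul_mul, Matrix.trace_smul, Finset.sum_mul, Matrix.trace_sum]
  rw [Finset.sum_eq_zero, smul_zero]
  intro g hg
  obtain ⟨c, q, hc, hgq⟩ := G.mem_pauli g hg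
  rw [hgq, Matrix.smul_mul, Matrix.trace_smul, trace_pauliOp_mul,
    if_neg (hnot g hg c q hc hgq), smul_zero]

lemma pauli_complete_sum (a b c d : V → Fin 2) :
    ∑ q : V → Fin 4, pauliOp q d c * pauliOp q a b
      = if d = b ∧ c = a then (2:ℂ) ^ Fintype.card V else 0 := by
  have h1 : ∀ q : V → Fin 4, pauliOp q d c * pauliOp q a b
      = ∏ i, (pauli1 (q i) (d i) (c i) * pauli1 (q i) (a i) (b i)) := fun q => by
    rw [show pauliOp q d c = ∏ i, pauli1 (q i) (d i) (c i) from rfl,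
      show pauliOp q a b = ∏ i, pauli1 (q i) (a i) (b i) from rfl, ← Finset.prod_mul_distrib]
  rw [Finset.sum_congr rfl fun q _ => h1 q,
    ← Fintype.prod_sum (fun i t => pauli1 t (d i) (c i) * pauli1 t (a i) (b i)),
    Finset.prod_congr rfl (fun i _ => pauli1_complete (d i) (c i) (a i) (b i))]
  by_cases h : d = b ∧ c = a
  · rw [if_pos h]
    obtain ⟨h1, h2⟩ := h
    subst h1; subst h2
    simp [Finset.prod_const, Finset.card_univ]
  · rw [if_neg h]
    obtain ⟨i, hi⟩ : ∃ i, ¬(d i = b i ∧ c i = a i) := by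
      by_contra hc
      push_neg at hc
      exact h ⟨funext fun i => (hc i).1, funext fun i => (hc i).2⟩
    exact Finset.prod_eq_zero (Finset.mem_univ i) (if_neg hi)

lemma pauli_expand (M : QOp V) (a b : V → Fin 2) :
    (2 ^ Fintype.card V : ℂ) * M a b
      = ∑ q : V → Fin 4, (M * pauliOp q).trace * pauliOp q a b := by
  symm
  have htr : ∀ q : V → Fin 4, (M * pauliOp q).trace
      = ∑ c, ∑ d, M c d * pauliOp q d c := by
    intro q
    rw [Matrix.trace]
    exact Finset.sum_congr rfl fun c _ => by rw [Matrix.diag_apply, Matrix.mul_apply]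
  calc ∑ q : V → Fin 4, (M * pauliOp q).trace * pauliOp q a b
      = ∑ q : V → Fin 4, ∑ c, ∑ d, M c d * (pauliOp q d c * pauliOp q a b) := by
        refine Finset.sum_congr rfl fun q _ => ?_
        rw [htr q, Finset.sum_mul]
        refine Finset.sum_congr rfl fun c _ => ?_
        rw [Finset.sum_mul]
        exact Finset.sum_congr rfl fun d _ => by ring
    _ = ∑ c, ∑ d, ∑ q : V → Fin 4, M c d * (pauliOp q d c * pauliOp q a b) := by
        rw [Finset.sum_comm]
        refine Finset.sum_congr rfl fun c _ => Finset.sum_comm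
    _ = ∑ c, ∑ d, M c d * (if d = b ∧ c = a then (2:ℂ) ^ Fintype.card V else 0) := by
        refine Finset.sum_congr rfl fun c _ => Finset.sum_congr rfl fun d _ => ?_
        rw [← Finset.mul_sum, pauli_complete_sum]
    _ = (2 ^ Fintype.card V : ℂ) * M a b := by
        rw [Finset.sum_eq_single a]
        · rw [Finset.sum_eq_single b]
          · simp [mul_comm]
          · intro d _ hd; simp [hd]
          · intro h; exact absurd (Finset.mem_univ b) h
        · intro c _ hc
          refine Finset.sum_eq_zero fun d _ => ?_
          simp [hc]
        · intro h; exact absurd (Finset.mem_univ a) h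


end AuxProof

/-- the stabilizer state has maximally mixed reduced state on every `k`-site
subset iff `k < δ(G)`. -/
theorem stmt4 (N k : ℕ) (G : MaxStabilizer (Fin N)) (ψ : (Fin N → Fin 2) → ℂ)
    (hψ : IsStabState G ψ) (hk : 1 ≤ k) (hkN : k ≤ N) :
    (∀ A : Finset (Fin N), A.card = k →
      reduced (projOf ψ) A = ((2 : ℂ) ^ k)⁻¹ • 1) ↔ k < sdelta G := by
  have hSne : {n | ∃ (c : ℂ) (p : Fin N → Fin 4), (c = 1 ∨ c = -1) ∧ c • pauliOp p ∈ G.carrier ∧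
      c • pauliOp p ≠ 1 ∧ (psupp p).card = n}.Nonempty := by
    have hcard : 1 < G.carrier.card := by
      rw [G.card_eq, Fintype.card_fin]
      exact Nat.one_lt_two_pow_iff.2 (by omega)
    obtain ⟨g, hg, hgne⟩ := Finset.exists_mem_ne hcard 1
    obtain ⟨c, p, hc, hgq⟩ := G.mem_pauli g hg
    exact ⟨(psupp p).card, c, p, hc, hgq ▸ hg, hgq ▸ hgne, rfl⟩
  constructor
  · intro hmix
    by_contra hlt
    push_neg at hlt
    obtain ⟨c, p, hc, hmemG, hne1, hcard⟩ := Nat.sInf_mem hSne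
    have hsupp_le : (psupp p).card ≤ k := by rw [hcard]; exact hlt
    have hpne : ∃ i, p i ≠ 0 := by
      by_contra hz; push_neg at hz
      have hp0 : p = fun _ => 0 := funext hz
      rw [hp0, pauliOp_const_zero] at hmemG hne1
      rcases hc with h | h
      · rw [h, one_smul] at hne1; exact hne1 rfl
      · rw [h] at hmemG; exact G.neg_one_not_mem (by simpa using hmemG)
    obtain ⟨A, hsubA, hAcard⟩ := Finset.exists_superset_card_eq hsupp_le
      (by rw [Fintype.card_fin]; exact hkN)
    have hp0 : ∀ i ∉ A, p i = 0 := fun i hi => by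
      by_contra hne
      exact hi (hsubA (Finset.mem_filter.2 ⟨Finset.mem_univ i, hne⟩))
    have hkey := trace_reduced_mul A ψ p hp0
    rw [hmix A hAcard] at hkey
    have hL : ((((2:ℂ)^k)⁻¹ • (1 : Matrix ({i // i ∈ A} → Fin 2) ({i // i ∈ A} → Fin 2) ℂ)) *
        pauliOp (fun i : {i // i ∈ A} => p i)).trace = 0 := by
      rw [Matrix.smul_mul, Matrix.one_mul, Matrix.trace_smul, trace_pauliOp_eq]
      obtain ⟨i, hi⟩ := hpne
      have hiA : i ∈ A := hsubA (Finset.mem_filter.2 ⟨Finset.mem_univ i, hi⟩)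
      rw [if_neg (by push_neg; exact ⟨⟨i, hiA⟩, hi⟩), smul_zero]
    rw [hL] at hkey
    have hmv : (pauliOp p).mulVec ψ = c • ψ := by
      have h1 : (c • pauliOp p).mulVec ψ = ψ := hψ.1 _ hmemG
      rw [Matrix.smul_mulVec] at h1
      have hc2 : c * c = 1 := by rcases hc with h|h <;> rw [h] <;> ring
      calc (pauliOp p).mulVec ψ = (c*c) • (pauliOp p).mulVec ψ := by rw [hc2, one_smul]
        _ = c • (c • (pauliOp p).mulVec ψ) := by rw [smul_smul]
        _ = c • ψ := by rw [h1]
    rw [hmv] at hkey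
    have hc0 : (0:ℂ) = c := by
      rw [hkey]
      calc ∑ x, starRingEnd ℂ (ψ x) * (c • ψ) x
          = c * ∑ x, starRingEnd ℂ (ψ x) * ψ x := by
            rw [Finset.mul_sum]
            exact Finset.sum_congr rfl fun x _ => by
              show starRingEnd ℂ (ψ x) * (c * ψ x) = _
              ring
        _ = c := by rw [hψ.2, mul_one]
    rcases hc with h|h <;> rw [h] at hc0 <;> norm_num at hc0
  · intro hlt A hAcard
    have hcardW : Fintype.card {i // i ∈ A} = k := by rw [Fintype.card_coe]; exact hAcard
    ext a b
    have hexp := pauli_expand (reduced (projOf ψ) A) a b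
    have hsum : ∑ q : {i // i ∈ A} → Fin 4,
        ((reduced (projOf ψ) A * pauliOp q).trace * pauliOp q a b)
          = (1 : Matrix ({i // i ∈ A} → Fin 2) ({i // i ∈ A} → Fin 2) ℂ) a b := by
      rw [Finset.sum_eq_single (fun _ => (0 : Fin 4))]
      · have h2 : (reduced (projOf ψ) A * pauliOp (fun _ : {i // i ∈ A} => (0:Fin 4))).trace
            = ∑ x, starRingEnd ℂ (ψ x) * ((pauliOp (fun _ : Fin N => (0:Fin 4))).mulVec ψ x) :=
          trace_reduced_mul A ψ (fun _ => 0) (fun _ _ => rfl)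
        rw [h2, pauliOp_const_zero, Matrix.one_mulVec, hψ.2, pauliOp_const_zero, one_mul]
      · intro q _ hq
        have hp0 : ∀ i ∉ A, (fun i => if h : i ∈ A then q ⟨i, h⟩ else 0) i = (0 : Fin 4) :=
          fun i hi => dif_neg hi
        set p : Fin N → Fin 4 := fun i => if h : i ∈ A then q ⟨i, h⟩ else 0 with hpdef
        have hrestr : (fun i : {i // i ∈ A} => p i) = q := funext fun i => dif_pos i.2
        have hnot : ∀ g ∈ G.carrier, ∀ (c : ℂ) (q' : Fin N → Fin 4), (c = 1 ∨ c = -1) →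
            g = c • pauliOp q' → q' ≠ p := by
          intro g hg c q' hc hgq hq'p
          subst hq'p
          by_cases hg1 : g = 1
          · rw [hg1] at hgq
            have htr := congrArg Matrix.trace hgq
            rw [Matrix.trace_one, Matrix.trace_smul, trace_pauliOp_eq] at htr
            have hpnz : ¬ ∀ i, p i = 0 := by
              intro hall
              obtain ⟨i, hi⟩ : ∃ i : {i // i ∈ A}, q i ≠ 0 := by
                by_contra hz; push_neg at hz; exact hq (funext hz)
              exact hi (by rw [← hrestr]; exact hall i)
            rw [if_neg hpnz, smul_zero] at htr
            simp only [Fintype.card_fun, Fintype.card_fin] at htr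
            norm_num at htr
          · have h3 : sdelta G ≤ (psupp p).card :=
              Nat.sInf_le ⟨c, p, hc, hgq ▸ hg, hgq ▸ hg1, rfl⟩
            have hsub : psupp p ⊆ A := fun i hi => by
              by_contra hiA
              exact (Finset.mem_filter.1 hi).2 (hp0 i hiA)
            have h4 : sdelta G ≤ k := le_trans h3 (hAcard ▸ Finset.card_le_card hsub)
            omega
        have h1 : (reduced (projOf ψ) A * pauliOp q).trace
            = ∑ x, starRingEnd ℂ (ψ x) * ((pauliOp p).mulVec ψ x) := by
          rw [← hrestr]; exact trace_reduced_mul A ψ p hp0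
        rw [h1, expect_eq_trace, projOf_eq_stabProj G ψ hψ,
          trace_stabProj_mul_pauliOp G p hnot, zero_mul]
      · intro h; exact absurd (Finset.mem_univ _) h
    rw [hsum, hcardW] at hexp
    rw [Matrix.smul_apply]
    have h2k : ((2:ℂ)^k) ≠ 0 := pow_ne_zero _ two_ne_zero
    field_simp
    rw [← hexp]
    rw [smul_eq_mul, ← mul_assoc, one_div, inv_mul_cancel₀ h2k, one_mul]
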